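/- For any matching μ of an assignment game, the minimum of the subset instability SI(μ, p) over all nonnegative price vectors p : S → ℝ equals OPT − SW(μ). -/

import Mathlib

open Finset
open scoped Classical
set_option linter.unusedSectionVars false

/-- A matching: a partial, injective assignment of buyers to sellers. -/
structure Matching (B S : Type*) where
  toFun : B → Option S
  inj : ∀ i i' j, toFun i = some j → toFun i' = some j → i = i'

variable {B S : Type*} [Fintype B] [Fintype S]

/-- Generated utility of a pair: `a i j = h i j - c j`. -/
def gain (h : B → S → ℝ) (c : S → ℝ) (i : B) (j : S) : ℝ := h i j - c j

/-- Social welfare of a matching. -/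
def SW (h : B → S → ℝ) (c : S → ℝ) (μ : Matching B S) : ℝ :=
  ∑ i : B, ((μ.toFun i).elim 0 (fun j => gain h c i j))

/-- Buyer utility under an allocation. -/
def buyerU (h : B → S → ℝ) (μ : Matching B S) (p : S → ℝ) (i : B) : ℝ :=
  (μ.toFun i).elim 0 (fun j => h i j - p j)

/-- Seller utility under an allocation. -/
def sellerU (c : S → ℝ) (p : S → ℝ) (j : S) : ℝ := p j - c j

/-- A seller is matched under `μ`. -/
def SellerMatched (μ : Matching B S) (j : S) : Prop := ∃ i, μ.toFun i = some j

/-- A valid price vector: nonnegative, and equal to the seller's valuation on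
unmatched sellers. -/
def ValidPrices (c : S → ℝ) (μ : Matching B S) (p : S → ℝ) : Prop :=
  (∀ j, 0 ≤ p j) ∧ (∀ j, ¬ SellerMatched μ j → p j = c j)

/-- Individual rationality of an allocation. -/
def IndivRational (h : B → S → ℝ) (c : S → ℝ) (μ : Matching B S) (p : S → ℝ) : Prop :=
  (∀ i, 0 ≤ buyerU h μ p i) ∧ (∀ j, 0 ≤ sellerU c p j)

/-- Stability of an allocation. -/
def Stable (h : B → S → ℝ) (c : S → ℝ) (μ : Matching B S) (p : S → ℝ) : Prop :=
  IndivRational h c μ p ∧ ∀ i j, gain h c i j ≤ buyerU h μ p i + sellerU c p j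

/-- The optimal (maximum) social welfare over all matchings. -/
noncomputable def OPT (h : B → S → ℝ) (c : S → ℝ) : ℝ :=
  sSup (Set.range (SW h c))

/-- `μ'` is a matching within the sub-market `(B', S')`. -/
def Within (B' : Finset B) (S' : Finset S) (μ' : Matching B S) : Prop :=
  ∀ i j, μ'.toFun i = some j → i ∈ B' ∧ j ∈ S'

/-- Subset instability of a pair of utility vectors `(u, v)`. -/
noncomputable def SIgen (h : B → S → ℝ) (c : S → ℝ) (u : B → ℝ) (v : S → ℝ) : ℝ :=
  sSup {x | ∃ (B' : Finset B) (S' : Finset S) (μ' : Matching B S),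
    Within B' S' μ' ∧ x = SW h c μ' - ((∑ i ∈ B', u i) + (∑ j ∈ S', v j))}

/-- Subset instability of an allocation. -/
noncomputable def SI (h : B → S → ℝ) (c : S → ℝ) (μ : Matching B S) (p : S → ℝ) : ℝ :=
  SIgen h c (buyerU h μ p) (sellerU c p)


section Aux

open Classical in
/-- matched pairs of a matching -/
noncomputable def mpairs (μ : Matching B S) : Finset (B × S) :=
  Finset.univ.filter (fun p => μ.toFun p.1 = some p.2)

lemma mem_mpairs {μ : Matching B S} {p : B × S} : p ∈ mpairs μ ↔ μ.toFun p.1 = some p.2 := by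
  classical simp [mpairs]

lemma sum_elim_eq_sum_mpairs (G : B → S → ℝ) (μ : Matching B S) :
    ∑ i : B, ((μ.toFun i).elim 0 (G i)) = ∑ p ∈ mpairs μ, G p.1 p.2 := by
  classical
  rw [mpairs, Finset.sum_filter, Fintype.sum_prod_type]
  refine Finset.sum_congr rfl (fun i _ => ?_)
  cases hm : μ.toFun i with
  | none => simp [hm]
  | some j0 => simp [hm, eq_comm]

lemma mpairs_fst_injOn (μ : Matching B S) :
    Set.InjOn Prod.fst (mpairs μ : Set (B × S)) := by
  intro p hp q hq hpq
  rw [Finset.mem_coe, mem_mpairs] at hp hq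
  rw [Prod.ext_iff]
  refine ⟨hpq, ?_⟩
  rw [hpq] at hp
  rw [hp] at hq
  exact (Option.some_inj.mp hq)

lemma mpairs_snd_injOn (μ : Matching B S) :
    Set.InjOn Prod.snd (mpairs μ : Set (B × S)) := by
  intro p hp q hq hpq
  rw [Finset.mem_coe, mem_mpairs] at hp hq
  have : p.1 = q.1 := μ.inj _ _ _ (hpq ▸ hp) hq
  exact Prod.ext this hpq

instance : Finite (Matching B S) := by
  refine Finite.of_injective (fun μ => μ.toFun) ?_
  intro μ ν hmn
  cases μ; cases ν; simpa using hmn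

def emptyMatching (B S : Type*) : Matching B S :=
  ⟨fun _ => none, fun i i' j hi _ => by simp at hi⟩

lemma SW_empty (h : B → S → ℝ) (c : S → ℝ) : SW h c (emptyMatching B S) = 0 := by
  simp [SW, emptyMatching]

lemma opt_spec (h : B → S → ℝ) (c : S → ℝ) :
    (∃ ν : Matching B S, SW h c ν = OPT h c) ∧ ∀ ν : Matching B S, SW h c ν ≤ OPT h c := by
  have hfin : (Set.range (SW h c)).Finite := Set.finite_range _
  have hne : (Set.range (SW h c)).Nonempty := ⟨_, ⟨emptyMatching B S, rfl⟩⟩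
  constructor
  · have := hne.csSup_mem hfin
    obtain ⟨ν, hν⟩ := this
    exact ⟨ν, hν⟩
  · intro ν
    exact le_csSup hfin.bddAbove ⟨ν, rfl⟩

lemma opt_nonneg (h : B → S → ℝ) (c : S → ℝ) : 0 ≤ OPT h c := by
  have := (opt_spec h c).2 (emptyMatching B S)
  rwa [SW_empty] at this

end Aux

section Chunk2

variable (h : B → S → ℝ) (c : S → ℝ)

def SIset (u : B → ℝ) (v : S → ℝ) : Set ℝ :=
  {x | ∃ (B' : Finset B) (S' : Finset S) (μ' : Matching B S),
    Within B' S' μ' ∧ x = SW h c μ' - ((∑ i ∈ B', u i) + (∑ j ∈ S', v j))}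

lemma SIset_finite (u : B → ℝ) (v : S → ℝ) : (SIset h c u v).Finite := by
  have : SIset h c u v ⊆ Set.range (fun t : Finset B × Finset S × Matching B S =>
      SW h c t.2.2 - ((∑ i ∈ t.1, u i) + (∑ j ∈ t.2.1, v j))) := by
    rintro x ⟨B', S', μ', _, rfl⟩
    exact ⟨(B', S', μ'), rfl⟩
  exact (Set.finite_range _).subset this

lemma SIset_nonempty (u : B → ℝ) (v : S → ℝ) : (SIset h c u v).Nonempty := by
  refine ⟨0, ∅, ∅, emptyMatching B S, ?_, ?_⟩
  · intro i j hij; simp [emptyMatching] at hij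
  · simp [SW_empty]

lemma mem_image_snd_iff (μ : Matching B S) (j : S) :
    j ∈ (mpairs μ).image Prod.snd ↔ SellerMatched μ j := by
  constructor
  · rintro hj
    obtain ⟨p, hp, rfl⟩ := Finset.mem_image.mp hj
    exact ⟨p.1, mem_mpairs.mp hp⟩
  · rintro ⟨i, hi⟩
    exact Finset.mem_image.mpr ⟨(i, j), mem_mpairs.mpr hi, rfl⟩

/-- total utilities equal the welfare, for valid prices -/
lemma total_utilities (μ : Matching B S) (p : S → ℝ) (hp : ValidPrices c μ p) :
    (∑ i : B, buyerU h μ p i) + (∑ j : S, sellerU c p j) = SW h c μ := by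
  have hb : ∑ i : B, buyerU h μ p i = ∑ q ∈ mpairs μ, (h q.1 q.2 - p q.2) :=
    sum_elim_eq_sum_mpairs (fun i j => h i j - p j) μ
  have hs : ∑ j : S, sellerU c p j = ∑ q ∈ mpairs μ, (p q.2 - c q.2) := by
    have h1 : ∑ j : S, sellerU c p j = ∑ j ∈ (mpairs μ).image Prod.snd, sellerU c p j := by
      refine (Finset.sum_subset (Finset.subset_univ _) ?_).symm
      intro j _ hj
      rw [mem_image_snd_iff] at hj
      simp [sellerU, hp.2 j hj]
    rw [h1, Finset.sum_image (fun p hp q hq hpq =>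
      mpairs_snd_injOn μ (Finset.mem_coe.mpr hp) (Finset.mem_coe.mpr hq) hpq)]
    rfl
  rw [hb, hs, ← Finset.sum_add_distrib, SW, sum_elim_eq_sum_mpairs (gain h c) μ]
  refine Finset.sum_congr rfl (fun q _ => ?_)
  simp only [gain]; ring

/-- lower bound : SI ≥ OPT - SW -/
lemma SI_lower (μ : Matching B S) (p : S → ℝ) (hp : ValidPrices c μ p) :
    OPT h c - SW h c μ ≤ SI h c μ p := by
  obtain ⟨⟨ν, hν⟩, -⟩ := opt_spec h c
  have hmem : OPT h c - SW h c μ ∈ SIset h c (buyerU h μ p) (sellerU c p) := by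
    refine ⟨Finset.univ, Finset.univ, ν, fun i j _ => ⟨Finset.mem_univ _, Finset.mem_univ _⟩, ?_⟩
    rw [hν, total_utilities h c μ p hp]
  exact le_csSup (SIset_finite h c _ _).bddAbove hmem

end Chunk2

section MD

/-- Mendelsohn–Dulmage-style combination: from an `E`-matching saturating `X`
and one saturating `Y`, get a single `E`-matching saturating both. -/
lemma md_combine {X : Set B} {Y : Set S} (E : B → S → Prop) (f : X → S) (g : Y → B)
    (hf : ∀ x : X, E x.1 (f x)) (hfi : Function.Injective f)
    (hg : ∀ y : Y, E (g y) y.1) (hgi : Function.Injective g) :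
    ∃ ν : Matching B S,
      (∀ i j, ν.toFun i = some j → E i j) ∧
      (∀ i ∈ X, (ν.toFun i).isSome) ∧
      (∀ j ∈ Y, ∃ i, ν.toFun i = some j) := by
  classical
  set Φ : Set X →o Set X :=
    ⟨fun C => {x | ∀ y : Y, g y = x.1 → ∃ x' ∈ C, f x' = y.1}, by
      intro C D hCD x hx y hgy
      obtain ⟨x', hx', he⟩ := hx y hgy
      exact ⟨x', hCD hx', he⟩⟩ with hΦ
  set C : Set X := OrderHom.lfp Φ with hCdef
  have hC : Φ C = C := OrderHom.map_lfp Φ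
  set m : B → Option S := fun i =>
    if h1 : ∃ hx : i ∈ X, (⟨i, hx⟩ : X) ∈ C then some (f ⟨i, h1.choose⟩)
    else if h2 : ∃ y : Y, g y = i ∧ ∀ x' ∈ C, f x' ≠ y.1 then some (h2.choose : Y).1
    else none with hm
  -- characterization of matched pairs
  have char : ∀ i j, m i = some j →
      (∃ hx : i ∈ X, (⟨i, hx⟩ : X) ∈ C ∧ f ⟨i, hx⟩ = j) ∨
      (∃ hy : j ∈ Y, g ⟨j, hy⟩ = i ∧ ∀ x' ∈ C, f x' ≠ j) := by
    intro i j
    simp only [hm]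
    split_ifs with h1 h2
    · intro hj
      replace hj := Option.some_inj.mp hj
      exact Or.inl ⟨h1.choose, h1.choose_spec, hj⟩
    · intro hj
      replace hj := Option.some_inj.mp hj
      obtain ⟨hgy, hav⟩ := h2.choose_spec
      refine Or.inr ⟨hj ▸ (h2.choose).2, ?_, ?_⟩
      · have he : (⟨j, hj ▸ (h2.choose).2⟩ : Y) = h2.choose := Subtype.ext hj.symm
        rw [he]; exact hgy
      · intro x' hx' hfx'
        exact hav x' hx' (by rw [hfx', hj])
    · intro hj; exact absurd hj (by simp)
  have hinj : ∀ i i' j, m i = some j → m i' = some j → i = i' := by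
    intro i i' j hi hi'
    rcases char i j hi with ⟨hx, hxC, hfx⟩ | ⟨hy, hgy, hav⟩
    · rcases char i' j hi' with ⟨hx', hxC', hfx'⟩ | ⟨hy', hgy', hav'⟩
      · have := hfi (a₁ := ⟨i, hx⟩) (a₂ := ⟨i', hx'⟩) (by rw [hfx, hfx'])
        exact congrArg Subtype.val this
      · exact absurd hfx (hav' _ hxC)
    · rcases char i' j hi' with ⟨hx', hxC', hfx'⟩ | ⟨hy', hgy', hav'⟩
      · exact absurd hfx' (hav _ hxC')
      · rw [← hgy, ← hgy']
  refine ⟨⟨m, hinj⟩, ?_, ?_, ?_⟩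
  · -- edges
    intro i j hij
    rcases char i j hij with ⟨hx, _, hfx⟩ | ⟨hy, hgy, _⟩
    · have := hf ⟨i, hx⟩
      rwa [hfx] at this
    · have := hg ⟨j, hy⟩
      rwa [hgy] at this
  · -- X saturated
    intro i hx
    show (m i).isSome
    simp only [hm]
    split_ifs with h1 h2
    · simp
    · simp
    · exfalso
      by_cases hxC : (⟨i, hx⟩ : X) ∈ C
      · exact h1 ⟨hx, hxC⟩
      · rw [← hC] at hxC
        simp only [hΦ, OrderHom.coe_mk, Set.mem_setOf_eq] at hxC
        replace hxC : ¬ ∀ y : Y, g y = i → ∃ x' ∈ C, f x' = y.1 := hxC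
        push_neg at hxC
        obtain ⟨y, hgy, hav⟩ := hxC
        exact h2 ⟨y, hgy, fun x' hx' hfx' => hav x' hx' hfx'⟩
  · -- Y saturated
    intro j hy
    by_cases hcov : ∃ x' ∈ C, f x' = j
    · obtain ⟨x', hx'C, hfx'⟩ := hcov
      refine ⟨x'.1, ?_⟩
      have h1 : ∃ hx : x'.1 ∈ X, (⟨x'.1, hx⟩ : X) ∈ C := ⟨x'.2, hx'C⟩
      show m x'.1 = some j
      simp only [hm, dif_pos h1]
      have : (⟨x'.1, h1.choose⟩ : X) = x' := Subtype.ext rfl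
      rw [this, hfx']
    · set yy : Y := ⟨j, hy⟩ with hyy
      refine ⟨g yy, ?_⟩
      have h1 : ¬ ∃ hx : g yy ∈ X, (⟨g yy, hx⟩ : X) ∈ C := by
        rintro ⟨hx, hxC⟩
        rw [← hC] at hxC
        obtain ⟨x', hx', he⟩ := hxC yy rfl
        exact hcov ⟨x', hx', he⟩
      have h2 : ∃ y : Y, g y = g yy ∧ ∀ x' ∈ C, f x' ≠ y.1 := by
        refine ⟨yy, rfl, fun x' hx' hfx' => hcov ⟨x', hx', hfx'⟩⟩
      show m (g yy) = some j
      simp only [hm, dif_neg h1, dif_pos h2]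
      have := hgi (a₁ := h2.choose) (a₂ := yy) h2.choose_spec.1
      rw [this]

end MD

section Dual

variable (h : B → S → ℝ) (c : S → ℝ)

lemma exists_dual (ha : ∀ i j, 0 ≤ gain h c i j) :
    ∃ (u : B → ℝ) (v : S → ℝ), (∀ i, 0 ≤ u i) ∧ (∀ j, 0 ≤ v j) ∧
      (∀ i j, gain h c i j ≤ u i + v j) ∧
      (∑ i : B, u i) + (∑ j : S, v j) ≤ OPT h c := by
  classical
  by_cases hBS : Nonempty B ∧ Nonempty S
  swap
  · refine ⟨fun _ => 0, fun _ => 0, fun _ => le_refl _, fun _ => le_refl _, ?_, ?_⟩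
    · intro i j
      exact absurd ⟨⟨i⟩, ⟨j⟩⟩ hBS
    · simpa using opt_nonneg h c
  obtain ⟨hB, hS⟩ := hBS
  obtain ⟨pm, hpm⟩ := Finite.exists_max (fun p : B × S => gain h c p.1 p.2)
  set A : ℝ := gain h c pm.1 pm.2 with hAdef
  have hA0 : 0 ≤ A := ha _ _
  have hbound : ∀ i j, gain h c i j ≤ A := fun i j => hpm (i, j)
  set F : (B → ℝ) × (S → ℝ) → ℝ := fun w => (∑ i : B, w.1 i) + (∑ j : S, w.2 j) with hF
  set K : Set ((B → ℝ) × (S → ℝ)) := {w | (∀ i, w.1 i ∈ Set.Icc 0 (A+1)) ∧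
    (∀ j, w.2 j ∈ Set.Icc 0 (A+1)) ∧ ∀ i j, gain h c i j ≤ w.1 i + w.2 j} with hK
  have hKeq : K = ((Set.univ.pi fun _ : B => Set.Icc (0:ℝ) (A+1)) ×ˢ
      (Set.univ.pi fun _ : S => Set.Icc (0:ℝ) (A+1))) ∩
      (⋂ i, ⋂ j, {w : (B → ℝ) × (S → ℝ) | gain h c i j ≤ w.1 i + w.2 j}) := by
    ext w
    simp only [hK, Set.mem_setOf_eq, Set.mem_inter_iff, Set.mem_prod, Set.mem_pi,
      Set.mem_univ, forall_true_left, Set.mem_iInter]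
    tauto
  have hKcomp : IsCompact K := by
    rw [hKeq]
    exact ((isCompact_univ_pi fun _ => isCompact_Icc).prod
        (isCompact_univ_pi fun _ => isCompact_Icc)).inter_right
      (isClosed_iInter fun i => isClosed_iInter fun j =>
        isClosed_le continuous_const
          (((continuous_apply i).comp continuous_fst).add
            ((continuous_apply j).comp continuous_snd)))
  have hKne : K.Nonempty := by
    refine ⟨(fun _ => A, fun _ => 0), fun i => ?_, fun j => ?_, fun i j => ?_⟩
    · show A ∈ Set.Icc (0:ℝ) (A+1)
      exact ⟨hA0, by linarith⟩
    · show (0:ℝ) ∈ Set.Icc (0:ℝ) (A+1)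
      exact ⟨le_refl _, by linarith⟩
    · show gain h c i j ≤ A + 0
      simpa using hbound i j
  have hFcont : Continuous F := by
    exact (continuous_finset_sum Finset.univ fun i _ =>
        (continuous_apply i).comp continuous_fst).add
      (continuous_finset_sum Finset.univ fun j _ =>
        (continuous_apply j).comp continuous_snd)
  obtain ⟨w, hwK, hwmin⟩ := hKcomp.exists_isMinOn hKne hFcont.continuousOn
  rw [isMinOn_iff] at hwmin
  set u : B → ℝ := w.1 with hu
  set v : S → ℝ := w.2 with hv
  have hu0 : ∀ i, 0 ≤ u i := fun i => (hwK.1 i).1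
  have hv0 : ∀ j, 0 ≤ v j := fun j => (hwK.2.1 j).1
  have hu1 : ∀ i, u i ≤ A + 1 := fun i => (hwK.1 i).2
  have hv1 : ∀ j, v j ≤ A + 1 := fun j => (hwK.2.1 j).2
  have hfeas : ∀ i j, gain h c i j ≤ u i + v j := hwK.2.2
  -- the minimizer is bounded by A
  have huA : ∀ i, u i ≤ A := by
    intro i0
    by_contra hlt
    push_neg at hlt
    have hw'K : (Function.update u i0 A, v) ∈ K := by
      refine ⟨fun i => ?_, hwK.2.1, fun i j => ?_⟩
      · show Function.update u i0 A i ∈ Set.Icc (0:ℝ) (A+1)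
        by_cases hi : i = i0
        · subst hi; rw [Function.update_self]; exact ⟨hA0, by linarith⟩
        · rw [Function.update_of_ne hi]; exact hwK.1 i
      · show gain h c i j ≤ Function.update u i0 A i + v j
        by_cases hi : i = i0
        · subst hi; rw [Function.update_self]
          have := hv0 j
          have := hbound i j
          linarith
        · rw [Function.update_of_ne hi]; exact hfeas i j
    have := hwmin _ hw'K
    simp only [hF] at this
    rw [Finset.sum_update_of_mem (Finset.mem_univ i0)] at this
    rw [← Finset.sum_erase_add Finset.univ u (Finset.mem_univ i0)] at this
    simp only [Finset.sdiff_singleton_eq_erase] at this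
    linarith
  have hvA : ∀ j, v j ≤ A := by
    intro j0
    by_contra hlt
    push_neg at hlt
    have hw'K : (u, Function.update v j0 A) ∈ K := by
      refine ⟨hwK.1, fun j => ?_, fun i j => ?_⟩
      · show Function.update v j0 A j ∈ Set.Icc (0:ℝ) (A+1)
        by_cases hj : j = j0
        · subst hj; rw [Function.update_self]; exact ⟨hA0, by linarith⟩
        · rw [Function.update_of_ne hj]; exact hwK.2.1 j
      · show gain h c i j ≤ u i + Function.update v j0 A j
        by_cases hj : j = j0
        · subst hj; rw [Function.update_self]
          have := hu0 i
          have := hbound i j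
          linarith
        · rw [Function.update_of_ne hj]; exact hfeas i j
    have := hwmin _ hw'K
    simp only [hF] at this
    rw [Finset.sum_update_of_mem (Finset.mem_univ j0)] at this
    rw [← Finset.sum_erase_add Finset.univ v (Finset.mem_univ j0)] at this
    simp only [Finset.sdiff_singleton_eq_erase] at this
    linarith

  -- Hall condition for buyers
  set X : Set B := {i | 0 < u i} with hX
  set T : B → Finset S := fun i => Finset.univ.filter (fun j => u i + v j ≤ gain h c i j) with hT
  have hallB : ∀ s : Finset X, s.card ≤ (s.biUnion fun x => T x.1).card := by
    by_contra hcon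
    push_neg at hcon
    obtain ⟨s, hs⟩ := hcon
    set A' : Finset B := s.image Subtype.val with hA'
    set N : Finset S := s.biUnion fun x => T x.1 with hN
    have hA'card : A'.card = s.card := Finset.card_image_of_injective s Subtype.val_injective
    have hA'pos : ∀ i ∈ A', 0 < u i := by
      intro i hi
      obtain ⟨x, hx, rfl⟩ := Finset.mem_image.mp hi
      exact x.2
    have hTN : ∀ i ∈ A', ∀ j ∈ T i, j ∈ N := by
      intro i hi j hj
      obtain ⟨x, hx, rfl⟩ := Finset.mem_image.mp hi
      exact Finset.mem_biUnion.mpr ⟨x, hx, hj⟩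
    set P : Finset (B × S) := (A' ×ˢ Finset.univ).filter (fun q => q.2 ∉ T q.1) with hP
    set fs : Finset ℝ := insert 1 ((A'.image u) ∪ (P.image fun q => u q.1 + v q.2 - gain h c q.1 q.2)) with hfs
    have hfs_ne : fs.Nonempty := ⟨1, Finset.mem_insert_self _ _⟩
    set eps : ℝ := fs.min' hfs_ne with heps
    have heps_mem_pos : ∀ x ∈ fs, 0 < x := by
      intro x hx
      rcases Finset.mem_insert.mp hx with rfl | hx
      · norm_num
      rcases Finset.mem_union.mp hx with hx | hx
      · obtain ⟨i, hi, rfl⟩ := Finset.mem_image.mp hx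
        exact hA'pos i hi
      · obtain ⟨q, hq, rfl⟩ := Finset.mem_image.mp hx
        have hq2 := (Finset.mem_filter.mp hq).2
        have hnt : ¬ (u q.1 + v q.2 ≤ gain h c q.1 q.2) := by
          intro hle
          exact hq2 (Finset.mem_filter.mpr ⟨Finset.mem_univ _, hle⟩)
        push_neg at hnt
        linarith
    have heps_pos : 0 < eps := heps_mem_pos _ (fs.min'_mem hfs_ne)
    have heps_one : eps ≤ 1 := Finset.min'_le _ _ (Finset.mem_insert_self _ _)
    have heps_u : ∀ i ∈ A', eps ≤ u i := fun i hi =>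
      Finset.min'_le _ _ (Finset.mem_insert_of_mem (Finset.mem_union_left _ (Finset.mem_image_of_mem u hi)))
    have heps_slack : ∀ i ∈ A', ∀ j, j ∉ T i → eps ≤ u i + v j - gain h c i j := by
      intro i hi j hj
      refine Finset.min'_le _ _ (Finset.mem_insert_of_mem (Finset.mem_union_right _ ?_))
      have hmemP : (i, j) ∈ P := Finset.mem_filter.mpr ⟨Finset.mem_product.mpr ⟨hi, Finset.mem_univ _⟩, hj⟩
      exact Finset.mem_image_of_mem _ hmemP
    set w' : (B → ℝ) × (S → ℝ) := (fun i => if i ∈ A' then u i - eps else u i,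
      fun j => if j ∈ N then v j + eps else v j) with hw'
    have hw'K : w' ∈ K := by
      refine ⟨fun i => ?_, fun j => ?_, fun i j => ?_⟩
      · show (if i ∈ A' then u i - eps else u i) ∈ Set.Icc (0:ℝ) (A+1)
        by_cases hi : i ∈ A' <;> simp only [hi, if_true, if_false]
        · exact ⟨by have := heps_u i hi; linarith, by have := hu1 i; linarith⟩
        · exact hwK.1 i
      · show (if j ∈ N then v j + eps else v j) ∈ Set.Icc (0:ℝ) (A+1)
        by_cases hj : j ∈ N <;> simp only [hj, if_true, if_false]
        · exact ⟨by have := hv0 j; linarith, by have := hvA j; linarith⟩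
        · exact hwK.2.1 j
      · show gain h c i j ≤ (if i ∈ A' then u i - eps else u i) + (if j ∈ N then v j + eps else v j)
        by_cases hi : i ∈ A'
        · by_cases hjT : j ∈ T i
          · have hjN : j ∈ N := hTN i hi j hjT
            simp only [hi, hjN, if_true]
            have := hfeas i j
            linarith
          · have := heps_slack i hi j hjT
            by_cases hjN : j ∈ N <;> simp only [hi, hjN, if_true, if_false] <;> linarith
        · have := hfeas i j
          by_cases hjN : j ∈ N <;> simp only [hi, hjN, if_true, if_false] <;> linarith
    have hsum1 : ∑ i : B, w'.1 i = (∑ i : B, u i) - eps * A'.card := by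
      show ∑ i : B, (if i ∈ A' then u i - eps else u i) = _
      have hpt : ∀ i : B, (if i ∈ A' then u i - eps else u i) = u i - (if i ∈ A' then eps else 0) := by
        intro i; by_cases hi : i ∈ A' <;> simp [hi]
      rw [Finset.sum_congr rfl (fun i _ => hpt i), Finset.sum_sub_distrib]
      congr 1
      rw [Finset.sum_ite_mem, Finset.univ_inter, Finset.sum_const, nsmul_eq_mul, mul_comm]
    have hsum2 : ∑ j : S, w'.2 j = (∑ j : S, v j) + eps * N.card := by
      show ∑ j : S, (if j ∈ N then v j + eps else v j) = _
      have hpt : ∀ j : S, (if j ∈ N then v j + eps else v j) = v j + (if j ∈ N then eps else 0) := by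
        intro j; by_cases hj : j ∈ N <;> simp [hj]
      rw [Finset.sum_congr rfl (fun j _ => hpt j), Finset.sum_add_distrib]
      congr 1
      rw [Finset.sum_ite_mem, Finset.univ_inter, Finset.sum_const, nsmul_eq_mul, mul_comm]
    have hcard : (N.card : ℝ) < A'.card := by
      rw [hA'card]
      exact_mod_cast hs
    have hFlt : F w' < F w := by
      show (∑ i : B, w'.1 i) + (∑ j : S, w'.2 j) < (∑ i : B, u i) + (∑ j : S, v j)
      rw [hsum1, hsum2]
      have : eps * N.card < eps * A'.card := mul_lt_mul_of_pos_left hcard heps_pos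
      linarith
    exact absurd (hwmin _ hw'K) (not_le.mpr hFlt)
  obtain ⟨f, hfinj, hfT⟩ :=
    (Finset.all_card_le_biUnion_card_iff_exists_injective (fun x : X => T x.1)).mp hallB
  -- Hall condition for sellers
  set Y : Set S := {j | 0 < v j} with hY
  set T' : S → Finset B := fun j => Finset.univ.filter (fun i => u i + v j ≤ gain h c i j) with hT'
  have hallS : ∀ s : Finset Y, s.card ≤ (s.biUnion fun y => T' y.1).card := by
    by_contra hcon
    push_neg at hcon
    obtain ⟨s, hs⟩ := hcon
    set A' : Finset S := s.image Subtype.val with hA'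
    set N : Finset B := s.biUnion fun y => T' y.1 with hN
    have hA'card : A'.card = s.card := Finset.card_image_of_injective s Subtype.val_injective
    have hA'pos : ∀ j ∈ A', 0 < v j := by
      intro j hj
      obtain ⟨y, hy, rfl⟩ := Finset.mem_image.mp hj
      exact y.2
    have hTN : ∀ j ∈ A', ∀ i ∈ T' j, i ∈ N := by
      intro j hj i hi
      obtain ⟨y, hy, rfl⟩ := Finset.mem_image.mp hj
      exact Finset.mem_biUnion.mpr ⟨y, hy, hi⟩
    set P : Finset (B × S) := (Finset.univ ×ˢ A').filter (fun q => q.1 ∉ T' q.2) with hP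
    set fs : Finset ℝ := insert 1 ((A'.image v) ∪ (P.image fun q => u q.1 + v q.2 - gain h c q.1 q.2)) with hfs
    have hfs_ne : fs.Nonempty := ⟨1, Finset.mem_insert_self _ _⟩
    set eps : ℝ := fs.min' hfs_ne with heps
    have heps_mem_pos : ∀ x ∈ fs, 0 < x := by
      intro x hx
      rcases Finset.mem_insert.mp hx with rfl | hx
      · norm_num
      rcases Finset.mem_union.mp hx with hx | hx
      · obtain ⟨j, hj, rfl⟩ := Finset.mem_image.mp hx
        exact hA'pos j hj
      · obtain ⟨q, hq, rfl⟩ := Finset.mem_image.mp hx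
        have hq2 := (Finset.mem_filter.mp hq).2
        have hnt : ¬ (u q.1 + v q.2 ≤ gain h c q.1 q.2) := by
          intro hle
          exact hq2 (Finset.mem_filter.mpr ⟨Finset.mem_univ _, hle⟩)
        push_neg at hnt
        linarith
    have heps_pos : 0 < eps := heps_mem_pos _ (fs.min'_mem hfs_ne)
    have heps_one : eps ≤ 1 := Finset.min'_le _ _ (Finset.mem_insert_self _ _)
    have heps_v : ∀ j ∈ A', eps ≤ v j := fun j hj =>
      Finset.min'_le _ _ (Finset.mem_insert_of_mem (Finset.mem_union_left _ (Finset.mem_image_of_mem v hj)))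
    have heps_slack : ∀ j ∈ A', ∀ i, i ∉ T' j → eps ≤ u i + v j - gain h c i j := by
      intro j hj i hi
      refine Finset.min'_le _ _ (Finset.mem_insert_of_mem (Finset.mem_union_right _ ?_))
      have hmemP : (i, j) ∈ P := Finset.mem_filter.mpr ⟨Finset.mem_product.mpr ⟨Finset.mem_univ _, hj⟩, hi⟩
      exact Finset.mem_image_of_mem _ hmemP
    set w' : (B → ℝ) × (S → ℝ) := (fun i => if i ∈ N then u i + eps else u i,
      fun j => if j ∈ A' then v j - eps else v j) with hw'
    have hw'K : w' ∈ K := by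
      refine ⟨fun i => ?_, fun j => ?_, fun i j => ?_⟩
      · show (if i ∈ N then u i + eps else u i) ∈ Set.Icc (0:ℝ) (A+1)
        by_cases hi : i ∈ N <;> simp only [hi, if_true, if_false]
        · exact ⟨by have := hu0 i; linarith, by have := huA i; linarith⟩
        · exact hwK.1 i
      · show (if j ∈ A' then v j - eps else v j) ∈ Set.Icc (0:ℝ) (A+1)
        by_cases hj : j ∈ A' <;> simp only [hj, if_true, if_false]
        · exact ⟨by have := heps_v j hj; linarith, by have := hv1 j; linarith⟩
        · exact hwK.2.1 j
      · show gain h c i j ≤ (if i ∈ N then u i + eps else u i) + (if j ∈ A' then v j - eps else v j)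
        by_cases hj : j ∈ A'
        · by_cases hiT : i ∈ T' j
          · have hiN : i ∈ N := hTN j hj i hiT
            simp only [hj, hiN, if_true]
            have := hfeas i j
            linarith
          · have := heps_slack j hj i hiT
            by_cases hiN : i ∈ N <;> simp only [hj, hiN, if_true, if_false] <;> linarith
        · have := hfeas i j
          by_cases hiN : i ∈ N <;> simp only [hj, hiN, if_true, if_false] <;> linarith
    have hsum1 : ∑ i : B, w'.1 i = (∑ i : B, u i) + eps * N.card := by
      show ∑ i : B, (if i ∈ N then u i + eps else u i) = _
      have hpt : ∀ i : B, (if i ∈ N then u i + eps else u i) = u i + (if i ∈ N then eps else 0) := by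
        intro i; by_cases hi : i ∈ N <;> simp [hi]
      rw [Finset.sum_congr rfl (fun i _ => hpt i), Finset.sum_add_distrib]
      congr 1
      rw [Finset.sum_ite_mem, Finset.univ_inter, Finset.sum_const, nsmul_eq_mul, mul_comm]
    have hsum2 : ∑ j : S, w'.2 j = (∑ j : S, v j) - eps * A'.card := by
      show ∑ j : S, (if j ∈ A' then v j - eps else v j) = _
      have hpt : ∀ j : S, (if j ∈ A' then v j - eps else v j) = v j - (if j ∈ A' then eps else 0) := by
        intro j; by_cases hj : j ∈ A' <;> simp [hj]
      rw [Finset.sum_congr rfl (fun j _ => hpt j), Finset.sum_sub_distrib]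
      congr 1
      rw [Finset.sum_ite_mem, Finset.univ_inter, Finset.sum_const, nsmul_eq_mul, mul_comm]
    have hcard : (N.card : ℝ) < A'.card := by
      rw [hA'card]
      exact_mod_cast hs
    have hFlt : F w' < F w := by
      show (∑ i : B, w'.1 i) + (∑ j : S, w'.2 j) < (∑ i : B, u i) + (∑ j : S, v j)
      rw [hsum1, hsum2]
      have : eps * N.card < eps * A'.card := mul_lt_mul_of_pos_left hcard heps_pos
      linarith
    exact absurd (hwmin _ hw'K) (not_le.mpr hFlt)
  obtain ⟨g, hginj, hgT⟩ :=
    (Finset.all_card_le_biUnion_card_iff_exists_injective (fun y : Y => T' y.1)).mp hallS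
  -- combine into a single matching with tight edges
  obtain ⟨ν, hνE, hνX, hνY⟩ := md_combine (fun i j => u i + v j ≤ gain h c i j) f g
    (fun x => (Finset.mem_filter.mp (hfT x)).2) hfinj
    (fun y => (Finset.mem_filter.mp (hgT y)).2) hginj
  refine ⟨u, v, hu0, hv0, hfeas, ?_⟩
  -- sum bound through the matching ν
  have hsum_u : ∑ i : B, u i = ∑ q ∈ mpairs ν, u q.1 := by
    rw [← sum_elim_eq_sum_mpairs (fun i _ => u i) ν]
    refine Finset.sum_congr rfl (fun i _ => ?_)
    cases hni : ν.toFun i with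
    | none =>
      have : ¬ (0 < u i) := by
        intro hpos
        have := hνX i hpos
        rw [hni] at this
        simp at this
      have : u i = 0 := le_antisymm (not_lt.mp this) (hu0 i)
      simp [this]
    | some j => simp
  have hsum_v : ∑ j : S, v j = ∑ q ∈ mpairs ν, v q.2 := by
    have h1 : ∑ j : S, v j = ∑ j ∈ (mpairs ν).image Prod.snd, v j := by
      refine (Finset.sum_subset (Finset.subset_univ _) ?_).symm
      intro j _ hj
      rw [mem_image_snd_iff] at hj
      have : ¬ (0 < v j) := by
        intro hpos
        exact hj (hνY j hpos)
      exact le_antisymm (not_lt.mp this) (hv0 j)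
    rw [h1, Finset.sum_image (fun p hp q hq hpq =>
      mpairs_snd_injOn ν (Finset.mem_coe.mpr hp) (Finset.mem_coe.mpr hq) hpq)]
  calc (∑ i : B, u i) + (∑ j : S, v j)
      = ∑ q ∈ mpairs ν, (u q.1 + v q.2) := by
        rw [hsum_u, hsum_v, Finset.sum_add_distrib]
    _ ≤ ∑ q ∈ mpairs ν, gain h c q.1 q.2 :=
        Finset.sum_le_sum (fun q hq => hνE q.1 q.2 (mem_mpairs.mp hq))
    _ = SW h c ν := (sum_elim_eq_sum_mpairs (gain h c) ν).symm
    _ ≤ OPT h c := (opt_spec h c).2 ν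

end Dual

section Main

variable (h : B → S → ℝ) (c : S → ℝ)

lemma SI_upper_exists (hc : ∀ j, 0 ≤ c j) (ha : ∀ i j, 0 ≤ gain h c i j) (μ : Matching B S) :
    ∃ p : S → ℝ, ValidPrices c μ p ∧ SI h c μ p ≤ OPT h c - SW h c μ := by
  classical
  obtain ⟨us, vs, hus0, hvs0, hfeas, hsum⟩ := exists_dual h c ha
  set p : S → ℝ := fun j =>
    if hm : SellerMatched μ j then max (c j) (h hm.choose j - us hm.choose) else c j with hp
  have hvalid : ValidPrices c μ p := by
    constructor
    · intro j
      by_cases hm : SellerMatched μ j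
      · simp only [hp, dif_pos hm]
        exact le_trans (hc j) (le_max_left _ _)
      · simp only [hp, dif_neg hm]
        exact hc j
    · intro j hm
      simp [hp, hm]
  have hbU : ∀ i, buyerU h μ p i ≤ us i := by
    intro i
    unfold buyerU
    cases hmi : μ.toFun i with
    | none => simpa using hus0 i
    | some j =>
      simp only [Option.elim]
      have hm : SellerMatched μ j := ⟨i, hmi⟩
      have hchoose : hm.choose = i := μ.inj _ _ _ hm.choose_spec hmi
      simp only [hp, dif_pos hm, hchoose]
      have hmax : h i j - us i ≤ max (c j) (h i j - us i) := le_max_right _ _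
      linarith
  have hsU : ∀ j, sellerU c p j ≤ vs j := by
    intro j
    unfold sellerU
    by_cases hm : SellerMatched μ j
    · simp only [hp, dif_pos hm]
      have hfj := hfeas hm.choose j
      simp only [gain] at hfj
      have hmax : max (c j) (h hm.choose j - us hm.choose) ≤ c j + vs j :=
        max_le (by have := hvs0 j; linarith) (by linarith)
      linarith
    · simp only [hp, dif_neg hm]
      simpa using hvs0 j
  refine ⟨p, hvalid, ?_⟩
  have hmain : ∀ x ∈ SIset h c (buyerU h μ p) (sellerU c p), x ≤ OPT h c - SW h c μ := by
    rintro x ⟨B', S', μ', hW, rfl⟩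
    have h1 : SW h c μ' ≤ (∑ i ∈ B', us i) + (∑ j ∈ S', vs j) := by
      rw [SW, sum_elim_eq_sum_mpairs (gain h c) μ']
      have step : ∑ q ∈ mpairs μ', gain h c q.1 q.2 ≤ ∑ q ∈ mpairs μ', (us q.1 + vs q.2) :=
        Finset.sum_le_sum fun q _ => hfeas q.1 q.2
      have hfst : ∑ q ∈ mpairs μ', us q.1 ≤ ∑ i ∈ B', us i := by
        have himg : ∑ i ∈ (mpairs μ').image Prod.fst, us i = ∑ q ∈ mpairs μ', us q.1 :=
          Finset.sum_image (fun p hp q hq hpq =>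
            mpairs_fst_injOn μ' (Finset.mem_coe.mpr hp) (Finset.mem_coe.mpr hq) hpq)
        rw [← himg]
        refine Finset.sum_le_sum_of_subset_of_nonneg ?_ (fun i _ _ => hus0 i)
        intro i hi
        obtain ⟨q, hq, rfl⟩ := Finset.mem_image.mp hi
        exact (hW q.1 q.2 (mem_mpairs.mp hq)).1
      have hsnd : ∑ q ∈ mpairs μ', vs q.2 ≤ ∑ j ∈ S', vs j := by
        have himg : ∑ j ∈ (mpairs μ').image Prod.snd, vs j = ∑ q ∈ mpairs μ', vs q.2 :=
          Finset.sum_image (fun p hp q hq hpq =>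
            mpairs_snd_injOn μ' (Finset.mem_coe.mpr hp) (Finset.mem_coe.mpr hq) hpq)
        rw [← himg]
        refine Finset.sum_le_sum_of_subset_of_nonneg ?_ (fun j _ _ => hvs0 j)
        intro j hj
        obtain ⟨q, hq, rfl⟩ := Finset.mem_image.mp hj
        exact (hW q.1 q.2 (mem_mpairs.mp hq)).2
      rw [Finset.sum_add_distrib] at step
      linarith
    have h2 : ∑ i ∈ B', (us i - buyerU h μ p i) ≤ ∑ i : B, (us i - buyerU h μ p i) :=
      Finset.sum_le_sum_of_subset_of_nonneg (Finset.subset_univ _)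
        (fun i _ _ => by have := hbU i; linarith)
    have h3 : ∑ j ∈ S', (vs j - sellerU c p j) ≤ ∑ j : S, (vs j - sellerU c p j) :=
      Finset.sum_le_sum_of_subset_of_nonneg (Finset.subset_univ _)
        (fun j _ _ => by have := hsU j; linarith)
    have h4 := total_utilities h c μ p hvalid
    rw [Finset.sum_sub_distrib] at h2 h3
    rw [Finset.sum_sub_distrib] at h2 h3
    linarith
  exact csSup_le (SIset_nonempty h c _ _) hmain

end Main

/-- Minimizing the subset instability over price vectors yields exactly the
optimality gap of the matching. -/
theorem min_SI_over_prices_eq_opt_gap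
    {B S : Type*} [Fintype B] [Fintype S]
    (h : B → S → ℝ) (c : S → ℝ)
    (hh : ∀ i j, 0 ≤ h i j) (hc : ∀ j, 0 ≤ c j)
    (ha : ∀ i j, 0 ≤ gain h c i j)
    (μ : Matching B S) :
    sInf {x | ∃ p : S → ℝ, ValidPrices c μ p ∧ x = SI h c μ p}
      = OPT h c - SW h c μ := by
  obtain ⟨p0, hval0, hle0⟩ := SI_upper_exists h c hc ha μ
  have hge : ∀ x ∈ {x | ∃ p : S → ℝ, ValidPrices c μ p ∧ x = SI h c μ p},
      OPT h c - SW h c μ ≤ x := by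
    rintro x ⟨p, hp, rfl⟩
    exact SI_lower h c μ p hp
  have heq : SI h c μ p0 = OPT h c - SW h c μ :=
    le_antisymm hle0 (SI_lower h c μ p0 hval0)
  apply le_antisymm
  · exact csInf_le ⟨OPT h c - SW h c μ, fun x hx => hge x hx⟩ ⟨p0, hval0, heq.symm⟩
  · exact le_csInf ⟨_, ⟨p0, hval0, rfl⟩⟩ hge
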